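/- On ℝ³ define the quadratic form q̄(r, c, d) = c² − 2rd. Let v = (r, c, d) ∈ ℝ³ with q̄(v) > 0; define β̄ = d/c if r = 0, and β̄ = (c − √(c² − 2rd))/r if r ≠ 0, and set w = (1, β̄, β̄²/2). Then q̄(w) = 0, the polar bilinear form of q̄ vanishes on the pair (v, w), and q̄ is positive semidefinite on the linear span of v and w, i.e. q̄(s·v + t·w) ≥ 0 for all s, t ∈ ℝ. -/

import Mathlib

/-- Lemma 5.2 of the paper.
On `ℝ³` with `q̄(r,c,d) = c² − 2rd`, let `v = (r,c,d)` with `q̄(v) > 0`, let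
`β̄ = d/c` if `r = 0` and `β̄ = (c − √(c² − 2rd))/r` otherwise, and set
`w = (1, β̄, β̄²/2)`.  Then `q̄(w) = 0`, the polar bilinear form of `q̄` vanishes on
`(v, w)`, and `q̄` is positive semidefinite on the span of `v` and `w`. -/
theorem stmt_15 (r c d : ℝ) (q : (Fin 3 → ℝ) → ℝ)
    (hq : ∀ v : Fin 3 → ℝ, q v = (v 1) ^ 2 - 2 * v 0 * v 2)
    (hv : 0 < q ![r, c, d]) (betabar : ℝ)
    (hβ : betabar = if r = 0 then d / c else (c - Real.sqrt (c ^ 2 - 2 * r * d)) / r) :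
    q ![1, betabar, betabar ^ 2 / 2] = 0 ∧
    q (![r, c, d] + ![1, betabar, betabar ^ 2 / 2]) - q ![r, c, d]
        - q ![1, betabar, betabar ^ 2 / 2] = 0 ∧
    ∀ s t : ℝ, 0 ≤ q (s • ![r, c, d] + t • ![1, betabar, betabar ^ 2 / 2]) := by
  rw [hq] at hv
  simp only [Matrix.cons_val_zero, Matrix.cons_val_one, Matrix.head_cons,
    Matrix.cons_val_two, Matrix.tail_cons] at hv
  have key : r * betabar ^ 2 - 2 * c * betabar + 2 * d = 0 := by
    by_cases hr : r = 0
    · have hc : c ≠ 0 := by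
        intro h; rw [hr, h] at hv; norm_num at hv
      rw [hβ, if_pos hr, hr]
      field_simp
      ring
    · have hs : Real.sqrt (c ^ 2 - 2 * r * d) ^ 2 = c ^ 2 - 2 * r * d :=
        Real.sq_sqrt hv.le
      rw [hβ, if_neg hr]
      field_simp
      rw [show c ^ 2 - r * 2 * d = c ^ 2 - 2 * r * d by ring]
      nlinarith [hs]
  refine ⟨?_, ?_, ?_⟩
  · rw [hq]
    simp only [Matrix.cons_val_zero, Matrix.cons_val_one, Matrix.head_cons,
      Matrix.cons_val_two, Matrix.tail_cons]
    ring
  · simp only [hq, Pi.add_apply, Matrix.cons_val_zero, Matrix.cons_val_one,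
      Matrix.head_cons, Matrix.cons_val_two, Matrix.tail_cons]
    linear_combination -key
  · intro s t
    simp only [hq, Pi.add_apply, Pi.smul_apply, smul_eq_mul, Matrix.cons_val_zero,
      Matrix.cons_val_one, Matrix.head_cons, Matrix.cons_val_two, Matrix.tail_cons]
    have : (s * c + t * betabar) ^ 2 - 2 * (s * r + t * 1) * (s * d + t * (betabar ^ 2 / 2))
        = s ^ 2 * (c ^ 2 - 2 * r * d) - s * t * (r * betabar ^ 2 - 2 * c * betabar + 2 * d) := by
      ring
    rw [this, key]
    nlinarith [sq_nonneg s]
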